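/- Let W be an L_d^τ-admissible R-submodule of 𝒟 with respect to z₁,…,z_d. Then for all i = 1,…,d and n with n − e_i > 0, ann_R(W_{n−e_i}) ∘ W_n = W_{n−(n_i−1)e_i}; i.e., condition (3) of L_d^τ-admissibility implies the Gorenstein-style condition (4.2) of Elias–Rossi for each level. -/

import Mathlib

open MvPolynomial
open scoped Classical

noncomputable section

variable {m : ℕ} {K : Type*} [Field K]

/-- The divided power module `𝒟 = K_DP[X₁,…,X_m]`, realized as finitely supported
coefficient functions on monomials in the dual variables. -/
abbrev DP (m : ℕ) (K : Type*) [Field K] : Type _ := (Fin m →₀ ℕ) →₀ K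

/-- Contraction action of a polynomial on the divided power module:
`x^a ∘ X^b = X^(b-a)` if `a ≤ b` componentwise, and `0` otherwise. -/
def contract (f : MvPolynomial (Fin m) K) (F : DP m K) : DP m K :=
  ∑ a ∈ f.support, F.sum fun b x =>
    if a ≤ b then Finsupp.single (b - a) (MvPolynomial.coeff a f * x) else 0

/-- Total degree of a monomial exponent. -/
def mdeg (b : Fin m →₀ ℕ) : ℕ := b.sum fun _ e => e

/-- Degree of an element of the divided power module. -/
def DPdeg (F : DP m K) : ℕ := F.support.sup mdeg

/-- Top degree form of an element of the divided power module. -/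
def topForm (F : DP m K) : DP m K := F.filter fun b => mdeg b = DPdeg F

/-- A subset of `𝒟` which is an `R`-submodule under the contraction action. -/
def IsDPSubmodule (W : Set (DP m K)) : Prop :=
  (0 : DP m K) ∈ W ∧ (∀ F G, F ∈ W → G ∈ W → F + G ∈ W) ∧
    (∀ (c : K), ∀ F, F ∈ W → c • F ∈ W) ∧
    (∀ (f : MvPolynomial (Fin m) K), ∀ F, F ∈ W → contract f F ∈ W)

/-- The `R`-submodule of `𝒟` generated by a set. -/
def DPspan (S : Set (DP m K)) : Set (DP m K) := ⋂₀ {W | IsDPSubmodule W ∧ S ⊆ W}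

/-- The annihilator of a subset of `𝒟` in `R`. -/
def DPann (W : Set (DP m K)) : Set (MvPolynomial (Fin m) K) :=
  {f | ∀ F ∈ W, contract f F = 0}

/-- `n ∈ ℕ₊^d`. -/
def Pos {d : ℕ} (n : Fin d → ℕ) : Prop := ∀ i, 1 ≤ n i

/-- `n - eᵢ`. -/
def decE {d : ℕ} (n : Fin d → ℕ) (i : Fin d) : Fin d → ℕ :=
  Function.update n i (n i - 1)

/-- The common degree `s_n` of the generators `H n j`. -/
def sdeg {m d τ : ℕ} {K : Type*} [Field K]
    (H : (Fin d → ℕ) → Fin τ → DP m K) (n : Fin d → ℕ) : ℕ :=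
  Finset.univ.sup fun j => DPdeg (H n j)

/-- The submodule `W_n = ⟨H_n^j : j = 1,…,τ⟩` of `𝒟`. -/
def Wn {m d τ : ℕ} {K : Type*} [Field K]
    (H : (Fin d → ℕ) → Fin τ → DP m K) (n : Fin d → ℕ) : Set (DP m K) :=
  DPspan (Set.range (H n))

/-- `V_n^i`: the `K`-span of the dual monomials `Z₁^{k₁}⋯Z_m^{k_m}` with
`k_i ≤ n_i − 2` and `|k| ≤ s`. -/
def Vni {m d : ℕ} {K : Type*} [Field K] (hdm : d ≤ m) (s : ℕ) (n : Fin d → ℕ)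
    (i : Fin d) : Set (DP m K) :=
  {F | ∀ b ∈ F.support, b (Fin.castLE hdm i) ≤ n i - 2 ∧ mdeg b ≤ s}

/-- Condition (1) of `L_d^τ`-admissibility: for each `n`, the generators `H_n^j` have a
common degree `s_n` and their forms of degree `s_n` are linearly independent. -/
def Cond1 {m d τ : ℕ} {K : Type*} [Field K]
    (H : (Fin d → ℕ) → Fin τ → DP m K) : Prop :=
  ∀ n, Pos n → (∀ j, DPdeg (H n j) = sdeg H n) ∧
    LinearIndependent K fun j => topForm (H n j)

/-- Condition (2) of `L_d^τ`-admissibility with respect to the sequence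
`z_i = x_i`, `i = 1,…,d` (after a change of coordinates the general elements, resp.
the regular linear sequence, may be taken to be the first `d` variables, with
`𝒟 = K_DP[Z₁,…,Z_m]` in the dual coordinates):
`z_i ∘ H_n^j = H_{n−e_i}^j` if `n − e_i > 0`, and `0` otherwise. -/
def Cond2 {m d τ : ℕ} {K : Type*} [Field K] (hdm : d ≤ m)
    (H : (Fin d → ℕ) → Fin τ → DP m K) : Prop :=
  ∀ n, Pos n → ∀ (i : Fin d) (j : Fin τ),
    contract (MvPolynomial.X (Fin.castLE hdm i)) (H n j) =
      if 2 ≤ n i then H (decE n i) j else 0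

/-- Condition (3) of `L_d^τ`-admissibility: `W_n ∩ V_n^i ⊆ W_{n−e_i}`. -/
def Cond3 {m d τ : ℕ} {K : Type*} [Field K] (hdm : d ≤ m)
    (H : (Fin d → ℕ) → Fin τ → DP m K) : Prop :=
  ∀ n, Pos n → ∀ i : Fin d, 2 ≤ n i →
    Wn H n ∩ Vni hdm (sdeg H n) n i ⊆ Wn H (decE n i)

/-- The generating set `{H_n^j : j = 1,…,τ, n ∈ ℕ₊^d}`. -/
def genSet {m d τ : ℕ} {K : Type*} [Field K]
    (H : (Fin d → ℕ) → Fin τ → DP m K) : Set (DP m K) :=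
  {F | ∃ n j, Pos n ∧ F = H n j}

/-- The family `H` is an `L_d^τ`-admissible system of generators. -/
def IsLdAdmissibleSystem {m d τ : ℕ} {K : Type*} [Field K] (hdm : d ≤ m)
    (H : (Fin d → ℕ) → Fin τ → DP m K) : Prop :=
  Cond1 H ∧ Cond2 hdm H ∧ Cond3 hdm H
theorem contract_eq_sum (f : MvPolynomial (Fin m) K) (F : DP m K)
    (s : Finset (Fin m →₀ ℕ)) (t : Finset (Fin m →₀ ℕ))
    (hs : f.support ⊆ s) (ht : F.support ⊆ t) :
    contract f F = ∑ a ∈ s, ∑ b ∈ t,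
      if a ≤ b then Finsupp.single (b - a) (MvPolynomial.coeff a f * F b) else 0 := by
  rw [contract]
  rw [Finset.sum_subset hs]
  · refine Finset.sum_congr rfl fun a _ => ?_
    rw [Finsupp.sum]
    rw [Finset.sum_subset ht]
    intro b _ hb
    rw [Finsupp.notMem_support_iff] at hb
    rw [hb]; simp
  · intro a _ ha
    rw [MvPolynomial.notMem_support_iff] at ha
    rw [Finsupp.sum]
    apply Finset.sum_eq_zero
    intro b _
    rw [ha]; simp
theorem contract_zero_right (f : MvPolynomial (Fin m) K) : contract f 0 = 0 := by
  rw [contract_eq_sum f 0 f.support ∅ le_rfl (by simp)]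
  simp

theorem contract_zero_left (F : DP m K) : contract (0 : MvPolynomial (Fin m) K) F = 0 := by
  rw [contract_eq_sum 0 F ∅ F.support (by simp) le_rfl]
  simp

theorem contract_add (f : MvPolynomial (Fin m) K) (F G : DP m K) :
    contract f (F + G) = contract f F + contract f G := by
  rw [contract_eq_sum f (F+G) f.support (F.support ∪ G.support)
      le_rfl (Finsupp.support_add),
    contract_eq_sum f F f.support (F.support ∪ G.support) le_rfl Finset.subset_union_left,
    contract_eq_sum f G f.support (F.support ∪ G.support) le_rfl Finset.subset_union_right,
    ← Finset.sum_add_distrib]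
  refine Finset.sum_congr rfl fun a _ => ?_
  rw [← Finset.sum_add_distrib]
  refine Finset.sum_congr rfl fun b _ => ?_
  split_ifs with h
  · rw [Finsupp.add_apply, mul_add, Finsupp.single_add]
  · rw [add_zero]

theorem contract_smul (f : MvPolynomial (Fin m) K) (c : K) (F : DP m K) :
    contract f (c • F) = c • contract f F := by
  rw [contract_eq_sum f (c • F) f.support F.support le_rfl Finsupp.support_smul,
    contract_eq_sum f F f.support F.support le_rfl le_rfl, Finset.smul_sum]
  refine Finset.sum_congr rfl fun a _ => ?_
  rw [Finset.smul_sum]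
  refine Finset.sum_congr rfl fun b _ => ?_
  split_ifs with h
  · rw [Finsupp.smul_apply, Finsupp.smul_single]
    congr 1
    simp [smul_eq_mul]; ring
  · rw [smul_zero]

theorem contract_add_left (f g : MvPolynomial (Fin m) K) (F : DP m K) :
    contract (f + g) F = contract f F + contract g F := by
  rw [contract_eq_sum (f+g) F (f.support ∪ g.support) F.support
      (MvPolynomial.support_add) le_rfl,
    contract_eq_sum f F (f.support ∪ g.support) F.support Finset.subset_union_left le_rfl,
    contract_eq_sum g F (f.support ∪ g.support) F.support Finset.subset_union_right le_rfl,
    ← Finset.sum_add_distrib]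
  refine Finset.sum_congr rfl fun a _ => ?_
  rw [← Finset.sum_add_distrib]
  refine Finset.sum_congr rfl fun b _ => ?_
  split_ifs with h
  · rw [MvPolynomial.coeff_add, add_mul, Finsupp.single_add]
  · rw [add_zero]

theorem contract_monomial_single (a : Fin m →₀ ℕ) (c : K) (b : Fin m →₀ ℕ) (x : K) :
    contract (MvPolynomial.monomial a c) (Finsupp.single b x) =
      if a ≤ b then Finsupp.single (b - a) (c * x) else 0 := by
  by_cases hc : c = 0
  · subst hc
    rw [map_zero, contract_zero_left]
    split_ifs <;> simp
  by_cases hx : x = 0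
  · subst hx
    rw [Finsupp.single_zero, contract_zero_right]
    split_ifs <;> simp
  rw [contract_eq_sum _ _ {a} {b}
      (by rw [MvPolynomial.support_monomial, if_neg hc])
      (by rw [Finsupp.support_single_ne_zero _ hx])]
  simp [MvPolynomial.coeff_monomial]
theorem finsupp_le_sub_iff (a a' b : Fin m →₀ ℕ) :
    (a' ≤ b ∧ a ≤ b - a') ↔ a + a' ≤ b := by
  constructor
  · rintro ⟨h1, h2⟩
    intro i
    have := h1 i
    have := h2 i
    rw [Finsupp.tsub_apply] at *
    simp only [Finsupp.add_apply]
    omega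
  · intro h
    constructor
    · intro i; have := h i; simp only [Finsupp.add_apply] at this; omega
    · intro i; have := h i; rw [Finsupp.tsub_apply]
      simp only [Finsupp.add_apply] at this; omega

theorem contract_mul_mono_mono_single (a a' : Fin m →₀ ℕ) (c c' : K)
    (b : Fin m →₀ ℕ) (x : K) :
    contract ((MvPolynomial.monomial a c) * (MvPolynomial.monomial a' c'))
        (Finsupp.single b x) =
      contract (MvPolynomial.monomial a c)
        (contract (MvPolynomial.monomial a' c') (Finsupp.single b x)) := by
  rw [MvPolynomial.monomial_mul, contract_monomial_single, contract_monomial_single]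
  by_cases h1 : a' ≤ b
  · rw [if_pos h1, contract_monomial_single]
    by_cases h2 : a ≤ b - a'
    · rw [if_pos h2, if_pos ((finsupp_le_sub_iff a a' b).1 ⟨h1, h2⟩)]
      congr 1
      · ext i
        rw [Finsupp.tsub_apply, Finsupp.tsub_apply, Finsupp.tsub_apply, Finsupp.add_apply]
        omega
      · ring
    · rw [if_neg h2, if_neg (fun hh => h2 (((finsupp_le_sub_iff a a' b).2 hh).2))]
  · rw [if_neg h1, if_neg (fun hh => h1 (((finsupp_le_sub_iff a a' b).2 hh).1)),
      contract_zero_right]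

theorem contract_mul_single (f g : MvPolynomial (Fin m) K) (b : Fin m →₀ ℕ) (x : K) :
    contract (f * g) (Finsupp.single b x) =
      contract f (contract g (Finsupp.single b x)) := by
  induction f using MvPolynomial.induction_on' with
  | monomial a c =>
    induction g using MvPolynomial.induction_on' with
    | monomial a' c' => exact contract_mul_mono_mono_single a a' c c' b x
    | add p q hp hq =>
      rw [mul_add, contract_add_left, hp, hq, contract_add_left, contract_add, ← hp, ← hq]
  | add p q hp hq =>
    rw [add_mul, contract_add_left, hp, hq, contract_add_left]

theorem contract_mul (f g : MvPolynomial (Fin m) K) (F : DP m K) :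
    contract (f * g) F = contract f (contract g F) := by
  induction F using Finsupp.induction with
  | zero => rw [contract_zero_right, contract_zero_right, contract_zero_right]
  | single_add b x F hb hx ih =>
    rw [contract_add, contract_add, contract_add, ih, contract_mul_single]

theorem contract_comm (f g : MvPolynomial (Fin m) K) (F : DP m K) :
    contract f (contract g F) = contract g (contract f F) := by
  rw [← contract_mul, mul_comm, contract_mul]

theorem contract_one (F : DP m K) : contract (1 : MvPolynomial (Fin m) K) F = F := by
  have h1 : (1 : MvPolynomial (Fin m) K) = MvPolynomial.monomial 0 1 := by
    simp [MvPolynomial.monomial_zero']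
  rw [h1, contract_eq_sum _ F {0} F.support
      (by rw [MvPolynomial.support_monomial]; simp) le_rfl]
  rw [Finset.sum_singleton]
  have : ∀ b ∈ F.support, (if (0 : Fin m →₀ ℕ) ≤ b then
      Finsupp.single (b - 0) (MvPolynomial.coeff 0 (MvPolynomial.monomial (0 : Fin m →₀ ℕ) (1:K)) * F b) else 0)
      = Finsupp.single b (F b) := by
    intro b _
    rw [if_pos (zero_le : (0 : Fin m →₀ ℕ) ≤ b), tsub_zero]
    simp [MvPolynomial.coeff_monomial]
  rw [Finset.sum_congr rfl this]
  exact Finsupp.sum_single F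
theorem support_contract (f : MvPolynomial (Fin m) K) (F : DP m K) :
    ∀ u ∈ (contract f F).support, ∃ b ∈ F.support, u ≤ b := by
  intro u hu
  rw [contract_eq_sum f F f.support F.support le_rfl le_rfl] at hu
  have h1 := Finsupp.support_finset_sum hu
  rw [Finset.mem_biUnion] at h1
  obtain ⟨a, _, ha⟩ := h1
  have h2 := Finsupp.support_finset_sum ha
  rw [Finset.mem_biUnion] at h2
  obtain ⟨b, hb, hb2⟩ := h2
  refine ⟨b, hb, ?_⟩
  split_ifs at hb2 with h
  · have := Finsupp.support_single_subset hb2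
    rw [Finset.mem_singleton] at this
    subst this
    exact tsub_le_self
  · simp at hb2

theorem mdeg_mono {u b : Fin m →₀ ℕ} (h : u ≤ b) : mdeg u ≤ mdeg b := by
  have hsub : u.support ⊆ b.support := by
    intro i hi
    rw [Finsupp.mem_support_iff] at *
    have := h i; omega
  rw [mdeg, mdeg, Finsupp.sum, Finsupp.sum]
  calc ∑ i ∈ u.support, u i ≤ ∑ i ∈ u.support, b i := Finset.sum_le_sum fun i _ => h i
    _ ≤ ∑ i ∈ b.support, b i := Finset.sum_le_sum_of_subset hsub

theorem isDPSubmodule_DPspan (S : Set (DP m K)) : IsDPSubmodule (DPspan S) := by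
  refine ⟨?_, ?_, ?_, ?_⟩
  · intro W hW; exact hW.1.1
  · intro F G hF hG W hW; exact hW.1.2.1 F G (hF W hW) (hG W hW)
  · intro c F hF W hW; exact hW.1.2.2.1 c F (hF W hW)
  · intro f F hF W hW; exact hW.1.2.2.2 f F (hF W hW)

theorem subset_DPspan (S : Set (DP m K)) : S ⊆ DPspan S := by
  intro F hF W hW; exact hW.2 hF

theorem DPspan_le {S W : Set (DP m K)} (hW : IsDPSubmodule W) (h : S ⊆ W) :
    DPspan S ⊆ W := fun F hF => hF W ⟨hW, h⟩

theorem H_mem_Wn {d τ : ℕ} (H : (Fin d → ℕ) → Fin τ → DP m K) (n : Fin d → ℕ) (j : Fin τ) :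
    H n j ∈ Wn H n := subset_DPspan _ ⟨j, rfl⟩

theorem Wn_deg {d τ : ℕ} (H : (Fin d → ℕ) → Fin τ → DP m K) (n : Fin d → ℕ)
    {F : DP m K} (hF : F ∈ Wn H n) : ∀ b ∈ F.support, mdeg b ≤ sdeg H n := by
  have key : Wn H n ⊆ {F : DP m K | ∀ b ∈ F.support, mdeg b ≤ sdeg H n} := by
    apply DPspan_le
    · refine ⟨?_, ?_, ?_, ?_⟩
      · intro b hb; simp at hb
      · intro F G hF hG b hb
        have := Finsupp.support_add hb
        rw [Finset.mem_union] at this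
        rcases this with h | h
        · exact hF b h
        · exact hG b h
      · intro c F hF b hb
        exact hF b (Finsupp.support_smul hb)
      · intro f F hF b hb
        obtain ⟨b', hb', hle⟩ := support_contract f F b hb
        exact le_trans (mdeg_mono hle) (hF b' hb')
    · rintro G ⟨j, rfl⟩
      intro b hb
      calc mdeg b ≤ DPdeg (H n j) := Finset.le_sup hb
        _ ≤ sdeg H n := Finset.le_sup (f := fun j => DPdeg (H n j)) (Finset.mem_univ j)
  exact key hF
theorem contract_X_eq_zero_support {i : Fin m} {F : DP m K}
    (h : contract (MvPolynomial.X i) F = 0) : ∀ b ∈ F.support, b i = 0 := by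
  by_contra hcon
  push_neg at hcon
  obtain ⟨b0, hb0, hb0i⟩ := hcon
  set e : Fin m →₀ ℕ := Finsupp.single i 1 with he
  have hXe : (MvPolynomial.X i : MvPolynomial (Fin m) K) = MvPolynomial.monomial e 1 := by
    rw [MvPolynomial.X]
  have heb0 : e ≤ b0 := by
    intro j
    rw [he]
    rcases eq_or_ne j i with rfl | hj
    · rw [Finsupp.single_eq_same]; omega
    · rw [Finsupp.single_eq_of_ne' (Ne.symm hj)]; omega
  have hsum : contract (MvPolynomial.X i) F = ∑ b ∈ F.support,
      if e ≤ b then Finsupp.single (b - e) (F b) else 0 := by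
    rw [hXe, contract_eq_sum _ F {e} F.support
        (by rw [MvPolynomial.support_monomial]; simp) le_rfl, Finset.sum_singleton]
    refine Finset.sum_congr rfl fun b _ => ?_
    split_ifs with hh
    · congr 1
      rw [MvPolynomial.coeff_monomial, if_pos rfl, one_mul]
    · rfl
  have hval : (contract (MvPolynomial.X i) F) (b0 - e) = F b0 := by
    rw [hsum, Finset.sum_apply']
    rw [Finset.sum_eq_single b0]
    · rw [if_pos heb0, Finsupp.single_eq_same]
    · intro b hb hne
      split_ifs with hh
      · rw [Finsupp.single_apply, if_neg, ]
        intro hcontra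
        apply hne
        have : b - e + e = b0 - e + e := by rw [hcontra]
        rwa [tsub_add_cancel_of_le hh, tsub_add_cancel_of_le heb0] at this
      · rfl
    · intro hb; exact absurd hb0 hb
  rw [h] at hval
  simp only [Finsupp.coe_zero, Pi.zero_apply] at hval
  exact Finsupp.mem_support_iff.1 hb0 hval.symm
section System
variable {d τ : ℕ} (hdm : d ≤ m) (H : (Fin d → ℕ) → Fin τ → DP m K)

theorem Pos_decE {n : Fin d → ℕ} {i : Fin d} (hn : Pos n) (h2 : 2 ≤ n i) :
    Pos (decE n i) := by
  intro j
  rw [decE]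
  rcases eq_or_ne j i with rfl | hj
  · rw [Function.update_self]; omega
  · rw [Function.update_of_ne hj]; exact hn j

theorem decE_same (n : Fin d → ℕ) (i : Fin d) : decE n i i = n i - 1 := by
  rw [decE, Function.update_self]

theorem update_decE (n : Fin d → ℕ) (i : Fin d) :
    Function.update (decE n i) i 1 = Function.update n i 1 := by
  rw [decE, Function.update_idem]

theorem contractX_Wn (h2c : Cond2 hdm H) {n : Fin d → ℕ} {i : Fin d}
    (hn : Pos n) (h2 : 2 ≤ n i) {F : DP m K} (hF : F ∈ Wn H n) :
    contract (MvPolynomial.X (Fin.castLE hdm i)) F ∈ Wn H (decE n i) := by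
  have key : Wn H n ⊆ {F : DP m K |
      contract (MvPolynomial.X (Fin.castLE hdm i)) F ∈ Wn H (decE n i)} := by
    apply DPspan_le
    · have hsub := isDPSubmodule_DPspan (Set.range (H (decE n i)))
      refine ⟨?_, ?_, ?_, ?_⟩
      · simp only [Set.mem_setOf_eq, contract_zero_right]; exact hsub.1
      · intro F G hF hG
        simp only [Set.mem_setOf_eq, contract_add]
        exact hsub.2.1 _ _ hF hG
      · intro c F hF
        simp only [Set.mem_setOf_eq, contract_smul]
        exact hsub.2.2.1 c _ hF
      · intro f F hF
        simp only [Set.mem_setOf_eq, contract_comm]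
        exact hsub.2.2.2 f _ hF
    · rintro G ⟨j, rfl⟩
      simp only [Set.mem_setOf_eq, h2c n hn i j, if_pos h2]
      exact H_mem_Wn H _ j
  exact key hF

theorem kill_pow (h2c : Cond2 hdm H) (i : Fin d) (j : Fin τ) :
    ∀ (k : ℕ) (n : Fin d → ℕ), Pos n → n i = k →
      contract (MvPolynomial.X (Fin.castLE hdm i) ^ k) (H n j) = 0 := by
  intro k
  induction k with
  | zero => intro n hn hni; exact absurd (hn i) (by omega)
  | succ k ih =>
    intro n hn hni
    rw [pow_succ, contract_mul, h2c n hn i j]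
    rcases Nat.eq_or_lt_of_le (hn i) with h1 | h1
    · rw [if_neg (by omega)]
      have : k = 0 := by omega
      rw [this, pow_zero, contract_one]
    · rw [if_pos (by omega)]
      exact ih (decE n i) (Pos_decE hn (by omega)) (by rw [decE_same]; omega)

theorem pow_mem_ann (h2c : Cond2 hdm H) {n : Fin d → ℕ} {i : Fin d}
    (hn : Pos n) (h2 : 2 ≤ n i) :
    MvPolynomial.X (Fin.castLE hdm i) ^ (n i - 1) ∈ DPann (Wn H (decE n i)) := by
  intro F hF
  have key : Wn H (decE n i) ⊆
      {F : DP m K | contract (MvPolynomial.X (Fin.castLE hdm i) ^ (n i - 1)) F = 0} := by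
    apply DPspan_le
    · refine ⟨?_, ?_, ?_, ?_⟩
      · show contract _ (0 : DP m K) = 0
        rw [contract_zero_right]
      · intro F G hF hG
        show contract _ (F + G) = 0
        rw [contract_add, hF, hG, add_zero]
      · intro c F hF
        show contract _ (c • F) = 0
        rw [contract_smul, hF, smul_zero]
      · intro f F hF
        show contract _ (contract f F) = 0
        rw [contract_comm, hF, contract_zero_right]
    · rintro G ⟨j, rfl⟩
      exact kill_pow hdm H h2c i j (n i - 1) (decE n i)
        (Pos_decE hn h2) (by rw [decE_same])
  exact key hF

theorem gen_pow (h2c : Cond2 hdm H) (i : Fin d) (j : Fin τ) :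
    ∀ (k : ℕ) (n : Fin d → ℕ), Pos n → n i = k + 1 →
      contract (MvPolynomial.X (Fin.castLE hdm i) ^ k) (H n j) =
        H (Function.update n i 1) j := by
  intro k
  induction k with
  | zero =>
    intro n hn hni
    rw [pow_zero, contract_one]
    congr 1
    rw [show (1 : ℕ) = n i from hni.symm, Function.update_eq_self]
  | succ k ih =>
    intro n hn hni
    rw [pow_succ, contract_mul, h2c n hn i j, if_pos (by omega),
      ih (decE n i) (Pos_decE hn (by omega)) (by rw [decE_same]; omega), update_decE]

theorem key_descent (h2c : Cond2 hdm H) (h3c : Cond3 hdm H) (i : Fin d) :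
    ∀ (k : ℕ) (n : Fin d → ℕ), n i = k → Pos n → ∀ G ∈ Wn H n,
      contract (MvPolynomial.X (Fin.castLE hdm i)) G = 0 →
      G ∈ Wn H (Function.update n i 1) := by
  intro k
  induction k using Nat.strong_induction_on with
  | _ k ih =>
    intro n hni hn G hG hGX
    rcases Nat.eq_or_lt_of_le (hn i) with h1 | h1
    · rw [show (1 : ℕ) = n i from h1, Function.update_eq_self]
      exact hG
    · have h2 : 2 ≤ n i := by omega
      have hV : G ∈ Vni hdm (sdeg H n) n i := by
        intro b hb
        refine ⟨?_, Wn_deg H n hG b hb⟩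
        rw [contract_X_eq_zero_support hGX b hb]
        omega
      have hdec : G ∈ Wn H (decE n i) := h3c n hn i h2 ⟨hG, hV⟩
      have := ih (n i - 1) (by omega) (decE n i) (by rw [decE_same])
        (Pos_decE hn h2) G hdec hGX
      rwa [update_decE] at this

end System

/-- Discussion 4.10. Let `W` be an `L_d^τ`-admissible `R`-submodule
of `𝒟` with respect to `z₁,…,z_d`. Then for all `i` and all `n` with `n − e_i > 0`,
`ann_R(W_{n−e_i}) ∘ W_n = W_{n−(n_i−1)e_i}` (as `R`-submodules of `𝒟`); i.e. condition
(3) of `L_d^τ`-admissibility implies the Gorenstein-style condition (4.2) of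
Elias–Rossi. -/
theorem cond3_implies_gorenstein_condition {m d τ : ℕ} {K : Type*} [Field K]
    (hdm : d ≤ m) (H : (Fin d → ℕ) → Fin τ → DP m K)
    (hadm : IsLdAdmissibleSystem hdm H) :
    ∀ n, Pos n → ∀ i : Fin d, 2 ≤ n i →
      DPspan {G | ∃ f ∈ DPann (Wn H (decE n i)), ∃ F ∈ Wn H n, G = contract f F} =
        Wn H (Function.update n i 1) := by
  obtain ⟨h1c, h2c, h3c⟩ := hadm
  intro n hn i h2
  set S : Set (DP m K) :=
    {G | ∃ f ∈ DPann (Wn H (decE n i)), ∃ F ∈ Wn H n, G = contract f F} with hS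
  apply Set.Subset.antisymm
  · apply DPspan_le (isDPSubmodule_DPspan _)
    rintro G ⟨f, hf, F, hF, rfl⟩
    have hGW : contract f F ∈ Wn H n :=
      (isDPSubmodule_DPspan _).2.2.2 f F hF
    have hGX : contract (MvPolynomial.X (Fin.castLE hdm i)) (contract f F) = 0 := by
      rw [contract_comm, hf _ (contractX_Wn hdm H h2c hn h2 hF)]
    exact key_descent hdm H h2c h3c i (n i) n rfl hn _ hGW hGX
  · apply DPspan_le (isDPSubmodule_DPspan S)
    rintro G ⟨j, rfl⟩
    apply subset_DPspan
    refine ⟨MvPolynomial.X (Fin.castLE hdm i) ^ (n i - 1),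
      pow_mem_ann hdm H h2c hn h2, H n j, H_mem_Wn H n j, ?_⟩
    rw [gen_pow hdm H h2c i j (n i - 1) n hn (by omega)]
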